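/- Let G = K_{n,n} (n ≥ 2) be the complete bipartite graph with parts {x_1,...,x_n}, {y_1,...,y_n} and edges e_{i,j} = {x_i, y_j}, and let α = (x_1⋯x_n y_1⋯y_n)^{n-1}. Then the Stanley–Reisner ideal of Γ(α) in k[e_{i,j}] is generated by the n monomials e_{i,1}e_{i,2}⋯e_{i,n} for i = 1,...,n together with the n monomials e_{1,j}e_{2,j}⋯e_{n,j} for j = 1,...,n. Equivalently, the minimal non-faces of Γ(α) are exactly the rows and columns of the edge set: {e_{i,1},...,e_{i,n}} for each i and {e_{1,j},...,e_{n,j}} for each j. -/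

import Mathlib

open MvPolynomial

/-- `F` is a face of `Γ(α)` for `α = (x_1⋯x_n y_1⋯y_n)^{n-1}` and `G = K_{n,n}`:
there is an exponent function `c` on the edges (= cells of the `n×n` grid) with all row
and column sums equal to `n-1` whose support contains `F`. -/
def IsKnnFace (n : ℕ) (F : Finset (Fin n × Fin n)) : Prop :=
  ∃ c : Fin n × Fin n → ℕ,
    (∀ i, ∑ j, c (i, j) = n - 1) ∧ (∀ j, ∑ i, c (i, j) = n - 1) ∧ (∀ p ∈ F, c p ≠ 0)

open Finset in
lemma exists_matrix : ∀ (N n : ℕ) (d e : Fin n → ℕ), ∑ i, d i = N → ∑ j, e j = N →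
    ∃ M : Fin n × Fin n → ℕ, (∀ i, ∑ j, M (i,j) = d i) ∧ (∀ j, ∑ i, M (i,j) = e j) := by
  intro N
  induction N with
  | zero =>
    intro n d e hd he
    refine ⟨fun _ => 0, fun i => ?_, fun j => ?_⟩ <;> simp
    · exact ((Finset.sum_eq_zero_iff.mp hd) i (mem_univ i)).symm
    · exact ((Finset.sum_eq_zero_iff.mp he) j (mem_univ j)).symm
  | succ N ih =>
    intro n d e hd he
    have hdi : ∃ i, d i ≠ 0 := by
      by_contra h
      push_neg at h
      simp [h] at hd
    have hej : ∃ j, e j ≠ 0 := by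
      by_contra h
      push_neg at h
      simp [h] at he
    obtain ⟨i₀, hi₀⟩ := hdi
    obtain ⟨j₀, hj₀⟩ := hej
    have hd' : ∑ i, Function.update d i₀ (d i₀ - 1) i = N := by
      rw [Finset.sum_update_of_mem (mem_univ _), Finset.sdiff_singleton_eq_erase]
      rw [← Finset.sum_erase_add _ _ (mem_univ i₀)] at hd
      omega
    have he' : ∑ j, Function.update e j₀ (e j₀ - 1) j = N := by
      rw [Finset.sum_update_of_mem (mem_univ _), Finset.sdiff_singleton_eq_erase]
      rw [← Finset.sum_erase_add _ _ (mem_univ j₀)] at he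
      omega
    obtain ⟨M, hM1, hM2⟩ := ih n _ _ hd' he'
    refine ⟨fun p => M p + (if p.1 = i₀ ∧ p.2 = j₀ then 1 else 0), fun i => ?_, fun j => ?_⟩
    · rw [Finset.sum_add_distrib, hM1]
      by_cases h : i = i₀ <;> simp [h, Function.update] <;> omega
    · rw [Finset.sum_add_distrib, hM2]
      by_cases h : j = j₀ <;> simp [h, Function.update] <;> omega

open Finset in
lemma face_iff (n : ℕ) (hn : 1 ≤ n) (F : Finset (Fin n × Fin n)) :
    IsKnnFace n F ↔ (∀ i, ∃ j, (i,j) ∉ F) ∧ (∀ j, ∃ i, (i,j) ∉ F) := by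
  constructor
  · rintro ⟨c, hr, hc, hs⟩
    constructor
    · intro i
      by_contra h
      push_neg at h
      have : ∀ j, 1 ≤ c (i, j) := fun j => Nat.one_le_iff_ne_zero.mpr (hs _ (h j))
      have := Finset.sum_le_sum (fun j (_ : j ∈ univ) => this j)
      rw [hr i] at this
      simp at this
      omega
    · intro j
      by_contra h
      push_neg at h
      have : ∀ i, 1 ≤ c (i, j) := fun i => Nat.one_le_iff_ne_zero.mpr (hs _ (h i))
      have := Finset.sum_le_sum (fun i (_ : i ∈ univ) => this i)
      rw [hc j] at this
      simp at this
      omega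
  · rintro ⟨h1, h2⟩
    have haf : ∀ i : Fin n, ∑ j, (if (i,j) ∈ F then 1 else 0)
        = (univ.filter fun j => (i,j) ∈ F).card :=
      fun i => (Finset.card_filter _ _).symm
    have hbf : ∀ j : Fin n, ∑ i, (if (i,j) ∈ F then 1 else 0)
        = (univ.filter fun i => (i,j) ∈ F).card :=
      fun j => (Finset.card_filter _ _).symm
    have hale : ∀ i, (univ.filter fun j => (i,j) ∈ F).card ≤ n - 1 := by
      intro i
      obtain ⟨j, hj⟩ := h1 i
      have : (univ.filter fun j => (i,j) ∈ F) ⊂ univ :=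
        Finset.filter_ssubset.mpr ⟨j, mem_univ j, hj⟩
      have := Finset.card_lt_card this
      simp at this
      omega
    have hble : ∀ j, (univ.filter fun i => (i,j) ∈ F).card ≤ n - 1 := by
      intro j
      obtain ⟨i, hi⟩ := h2 j
      have : (univ.filter fun i => (i,j) ∈ F) ⊂ univ :=
        Finset.filter_ssubset.mpr ⟨i, mem_univ i, hi⟩
      have := Finset.card_lt_card this
      simp at this
      omega
    have hab : ∑ i, (univ.filter fun j => (i,j) ∈ F).card
        = ∑ j, (univ.filter fun i => (i,j) ∈ F).card := by
      rw [← Finset.sum_congr rfl (fun i _ => (haf i)),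
        ← Finset.sum_congr rfl (fun j _ => (hbf j))]
      exact Finset.sum_comm
    have hde : ∑ i, (n - 1 - (univ.filter fun j => (i,j) ∈ F).card)
        = ∑ j, (n - 1 - (univ.filter fun i => (i,j) ∈ F).card) := by
      rw [Finset.sum_tsub_distrib _ (fun i _ => hale i),
        Finset.sum_tsub_distrib _ (fun j _ => hble j), hab]
    obtain ⟨M, hM1, hM2⟩ := exists_matrix _ n _ _ hde rfl
    refine ⟨fun p => (if p ∈ F then 1 else 0) + M p, fun i => ?_, fun j => ?_,
      fun p hp => by simp [hp]⟩
    · rw [Finset.sum_add_distrib, hM1, haf]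
      have := hale i; omega
    · rw [Finset.sum_add_distrib, hM2, hbf]
      have := hble j; omega

open Finset in
lemma prod_row (k : Type) [Field k] (n : ℕ) (i : Fin n) :
    ∏ p ∈ univ.filter (fun p : Fin n × Fin n => p.1 = i), (X p : MvPolynomial (Fin n × Fin n) k)
      = ∏ j, X (i, j) := by
  rw [Finset.prod_filter, Fintype.prod_prod_type]
  have : ∀ x : Fin n, (∏ y : Fin n, if x = i then (X (x,y) : MvPolynomial (Fin n × Fin n) k) else 1)
      = if x = i then ∏ y, X (x,y) else 1 := by
    intro x; split <;> simp
  rw [Finset.prod_congr rfl (fun x _ => this x), Finset.prod_ite_eq']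
  simp

open Finset in
lemma prod_col (k : Type) [Field k] (n : ℕ) (j : Fin n) :
    ∏ p ∈ univ.filter (fun p : Fin n × Fin n => p.2 = j), (X p : MvPolynomial (Fin n × Fin n) k)
      = ∏ i, X (i, j) := by
  rw [Finset.prod_filter, Fintype.prod_prod_type]
  have : ∀ x : Fin n, (∏ y : Fin n, if y = j then (X (x,y) : MvPolynomial (Fin n × Fin n) k) else 1)
      = X (x, j) := by
    intro x; rw [Finset.prod_ite_eq']
    simp
  rw [Finset.prod_congr rfl (fun x _ => this x)]

open Finset in
lemma row_subset {n : ℕ} {F : Finset (Fin n × Fin n)} {i : Fin n}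
    (hi : ∀ j, (i, j) ∈ F) : univ.filter (fun p : Fin n × Fin n => p.1 = i) ⊆ F := by
  intro p hp
  simp only [mem_filter] at hp
  have := hi p.2
  rw [← hp.2] at this
  exact this

open Finset in
lemma col_subset {n : ℕ} {F : Finset (Fin n × Fin n)} {j : Fin n}
    (hj : ∀ i, (i, j) ∈ F) : univ.filter (fun p : Fin n × Fin n => p.2 = j) ⊆ F := by
  intro p hp
  simp only [mem_filter] at hp
  have := hj p.1
  rw [← hp.2] at this
  exact this

open Finset in
lemma row_not_face {n : ℕ} (hn : 1 ≤ n) (i : Fin n) :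
    ¬ IsKnnFace n (univ.filter (fun p : Fin n × Fin n => p.1 = i)) := by
  rw [face_iff n hn]
  rintro ⟨h1, -⟩
  obtain ⟨j, hj⟩ := h1 i
  exact hj (by simp)

open Finset in
lemma col_not_face {n : ℕ} (hn : 1 ≤ n) (j : Fin n) :
    ¬ IsKnnFace n (univ.filter (fun p : Fin n × Fin n => p.2 = j)) := by
  rw [face_iff n hn]
  rintro ⟨-, h2⟩
  obtain ⟨i, hi⟩ := h2 j
  exact hi (by simp)
/-- The Stanley–Reisner ideal of `Γ(α)`: generated by the squarefree monomials
corresponding to the non-faces of `Γ(α)`. -/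
noncomputable def srIdeal (k : Type) [Field k] (n : ℕ) : Ideal (MvPolynomial (Fin n × Fin n) k) :=
  Ideal.span {m | ∃ F : Finset (Fin n × Fin n), ¬ IsKnnFace n F ∧ m = ∏ p ∈ F, X p}

/-- for `G = K_{n,n}` (`n ≥ 2`) and `α = (x_1⋯x_n y_1⋯y_n)^{n-1}`, the
Stanley–Reisner ideal of `Γ(α)` is generated by the `n` row products
`e_{i,1}⋯e_{i,n}` and the `n` column products `e_{1,j}⋯e_{n,j}`.  Equivalently, the
minimal non-faces of `Γ(α)` are exactly the rows and the columns of the grid. -/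
theorem stmt1 (k : Type) [Field k] (n : ℕ) (hn : 2 ≤ n) :
    srIdeal k n =
      Ideal.span ({m | ∃ i, m = ∏ j, X (i, j)} ∪ {m | ∃ j, m = ∏ i, X (i, j)} :
        Set (MvPolynomial (Fin n × Fin n) k)) ∧
    (∀ F : Finset (Fin n × Fin n),
      (¬ IsKnnFace n F ∧ ∀ F' ⊂ F, IsKnnFace n F') ↔
        ((∃ i, F = Finset.univ.filter (fun p => p.1 = i)) ∨
         (∃ j, F = Finset.univ.filter (fun p => p.2 = j)))) := by
  have hn1 : 1 ≤ n := le_trans one_le_two hn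
  have hnt : Nontrivial (Fin n) := Fin.nontrivial_iff_two_le.mpr hn
  constructor
  · apply le_antisymm
    · rw [srIdeal, Ideal.span_le]
      rintro m ⟨F, hF, rfl⟩
      rw [face_iff n hn1, not_and_or] at hF
      push_neg at hF
      rcases hF with ⟨i, hi⟩ | ⟨j, hj⟩
      · rw [← Finset.prod_sdiff (row_subset hi), prod_row]
        exact Ideal.mul_mem_left _ _
          (Ideal.subset_span (Set.mem_union_left _ ⟨i, rfl⟩))
      · rw [← Finset.prod_sdiff (col_subset hj), prod_col]
        exact Ideal.mul_mem_left _ _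
          (Ideal.subset_span (Set.mem_union_right _ ⟨j, rfl⟩))
    · rw [Ideal.span_le]
      rintro m (⟨i, rfl⟩ | ⟨j, rfl⟩)
      · exact Ideal.subset_span
          ⟨Finset.univ.filter (fun p => p.1 = i), row_not_face hn1 i, (prod_row k n i).symm⟩
      · exact Ideal.subset_span
          ⟨Finset.univ.filter (fun p => p.2 = j), col_not_face hn1 j, (prod_col k n j).symm⟩
  · intro F
    constructor
    · rintro ⟨hF, hmin⟩
      rw [face_iff n hn1, not_and_or] at hF
      push_neg at hF
      rcases hF with ⟨i, hi⟩ | ⟨j, hj⟩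
      · left
        refine ⟨i, ?_⟩
        by_contra hne
        have hss : Finset.univ.filter (fun p : Fin n × Fin n => p.1 = i) ⊂ F :=
          (row_subset hi).ssubset_of_ne (fun h => hne h.symm)
        exact row_not_face hn1 i (hmin _ hss)
      · right
        refine ⟨j, ?_⟩
        by_contra hne
        have hss : Finset.univ.filter (fun p : Fin n × Fin n => p.2 = j) ⊂ F :=
          (col_subset hj).ssubset_of_ne (fun h => hne h.symm)
        exact col_not_face hn1 j (hmin _ hss)
    · rintro (⟨i, rfl⟩ | ⟨j, rfl⟩)
      · refine ⟨row_not_face hn1 i, fun F' hF' => ?_⟩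
        rw [face_iff n hn1]
        obtain ⟨p, hpF, hpF'⟩ := Finset.exists_of_ssubset hF'
        have hsub := hF'.subset
        have hp1 : p.1 = i := (Finset.mem_filter.mp hpF).2
        constructor
        · intro i'
          by_cases h : i' = i
          · subst h
            exact ⟨p.2, by rw [← hp1]; exact hpF'⟩
          · obtain ⟨j, hj⟩ : ∃ _ : Fin n, True := ⟨i, trivial⟩
            refine ⟨j, fun hc => ?_⟩
            have := hsub hc
            simp only [Finset.mem_filter] at this
            exact h this.2
        · intro j
          obtain ⟨i', hi'⟩ := exists_ne i
          refine ⟨i', fun hc => ?_⟩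
          have := hsub hc
          simp only [Finset.mem_filter] at this
          exact hi' this.2
      · refine ⟨col_not_face hn1 j, fun F' hF' => ?_⟩
        rw [face_iff n hn1]
        obtain ⟨p, hpF, hpF'⟩ := Finset.exists_of_ssubset hF'
        have hsub := hF'.subset
        have hp2 : p.2 = j := (Finset.mem_filter.mp hpF).2
        constructor
        · intro i
          obtain ⟨j', hj'⟩ := exists_ne j
          refine ⟨j', fun hc => ?_⟩
          have := hsub hc
          simp only [Finset.mem_filter] at this
          exact hj' this.2
        · intro j'
          by_cases h : j' = j
          · subst h
            exact ⟨p.1, by rw [← hp2]; exact hpF'⟩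
          · obtain ⟨i, hi⟩ : ∃ _ : Fin n, True := ⟨j, trivial⟩
            refine ⟨i, fun hc => ?_⟩
            have := hsub hc
            simp only [Finset.mem_filter] at this
            exact h this.2
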